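/- Let T be a bounded-below operator on H, so that T^# = (T*T)^{-1}T* is well defined. Then for each n ≥ 0, Tⁿ(Tⁿ)^# is the orthogonal projection onto Tⁿ H, and Tⁿ(Tⁿ)^# − T^(n+1)(T^(n+1))^# is the orthogonal projection onto Tⁿ(ker T*), provided T is a near-isometry. -/

import Mathlib

open ContinuousLinearMap

/-- Near-isometry (orthogonality form): bounded-below contraction with
`Tᵐ(ker T*) ⊥ Tᵐ⁺¹ H` for all `m ≥ 0`. -/
def IsNearIsometry {K : Type*} [NormedAddCommGroup K] [InnerProductSpace ℂ K]
    [CompleteSpace K] (T : K →L[ℂ] K) : Prop :=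
  (∃ δ > (0 : ℝ), ∀ x : K, δ * ‖x‖ ≤ ‖T x‖ ∧ ‖T x‖ ≤ ‖x‖) ∧
  ∀ n : ℕ, ∀ x ∈ LinearMap.ker ((adjoint T : K →L[ℂ] K) : K →ₗ[ℂ] K), ∀ y : K,
    (inner ℂ ((T ^ n) x) ((T ^ (n + 1)) y) : ℂ) = 0

/-- The left inverse `S^# = (S*S)⁻¹ S*` of a bounded-below operator `S`. -/
noncomputable def sharp {K : Type*} [NormedAddCommGroup K] [InnerProductSpace ℂ K]
    [CompleteSpace K] (S : K →L[ℂ] K) : K →L[ℂ] K :=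
  Ring.inverse (adjoint S * S) * adjoint S

/-- `P` is the orthogonal projection onto the subspace `M`. -/
def IsOrthoProjOnto {K : Type*} [NormedAddCommGroup K] [InnerProductSpace ℂ K]
    (P : K →L[ℂ] K) (M : Submodule ℂ K) : Prop :=
  ∀ x : K, P x ∈ M ∧ ∀ y ∈ M, (inner ℂ (x - P x) y : ℂ) = 0

section Aux
variable {H : Type*} [NormedAddCommGroup H] [InnerProductSpace ℂ H] [CompleteSpace H]

lemma aux_isUnit (S : H →L[ℂ] H) (c : ℝ) (hc : 0 < c) (h : ∀ x : H, c * ‖x‖ ≤ ‖S x‖) :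
    IsUnit (adjoint S * S) := by
  set A := adjoint S * S with hA
  have hinner : ∀ x : H, (inner ℂ (A x) x : ℂ) = (‖S x‖ : ℂ) ^ 2 := by
    intro x
    rw [hA, ContinuousLinearMap.mul_apply, adjoint_inner_left, inner_self_eq_norm_sq_to_K]
    norm_cast
  have hbb : ∀ x : H, c ^ 2 * ‖x‖ ≤ ‖A x‖ := by
    intro x
    rcases eq_or_ne x 0 with rfl | hx
    · simp
    have hxpos : 0 < ‖x‖ := norm_pos_iff.mpr hx
    have h1 : (c * ‖x‖) ^ 2 ≤ ‖S x‖ ^ 2 := by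
      apply pow_le_pow_left₀ (by positivity) (h x)
    have h2 : (‖S x‖ : ℝ) ^ 2 = ‖(inner ℂ (A x) x : ℂ)‖ := by
      rw [hinner x]; rw [norm_pow, Complex.norm_real, Real.norm_eq_abs,
        abs_of_nonneg (norm_nonneg _)]
    have h3 : ‖(inner ℂ (A x) x : ℂ)‖ ≤ ‖A x‖ * ‖x‖ := norm_inner_le_norm _ _
    have : c ^ 2 * ‖x‖ * ‖x‖ ≤ ‖A x‖ * ‖x‖ := by
      calc c ^ 2 * ‖x‖ * ‖x‖ = (c * ‖x‖) ^ 2 := by ring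
        _ ≤ ‖S x‖ ^ 2 := h1
        _ = ‖(inner ℂ (A x) x : ℂ)‖ := h2
        _ ≤ ‖A x‖ * ‖x‖ := h3
    exact le_of_mul_le_mul_right this hxpos
  have hker : LinearMap.ker (A : H →ₗ[ℂ] H) = ⊥ := by
    rw [LinearMap.ker_eq_bot']
    intro x hx
    have := hbb x
    rw [show A x = 0 from hx, norm_zero] at this
    have hx0 : ‖x‖ ≤ 0 := by nlinarith [norm_nonneg x, pow_pos hc 2]
    exact norm_eq_zero.mp (le_antisymm hx0 (norm_nonneg x))
  have hanti : AntilipschitzWith (⟨c^2, by positivity⟩ : NNReal)⁻¹ A := by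
    apply ContinuousLinearMap.antilipschitz_of_bound
    intro x
    change ‖x‖ ≤ (c ^ 2)⁻¹ * ‖A x‖
    rw [le_inv_mul_iff₀ (by positivity)]
    exact hbb x
  have hclosed : IsClosed (Set.range A) := hanti.isClosed_range A.uniformContinuous
  have hclosed' : IsClosed ((LinearMap.range ((A : H →L[ℂ] H) : H →ₗ[ℂ] H) : Submodule ℂ H) : Set H) := by
    exact hclosed
  haveI : CompleteSpace (LinearMap.range ((A : H →L[ℂ] H) : H →ₗ[ℂ] H) : Submodule ℂ H) := hclosed'.completeSpace_coe
  have hrange : LinearMap.range ((A : H →L[ℂ] H) : H →ₗ[ℂ] H) = ⊤ := by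
    rw [← Submodule.orthogonal_eq_bot_iff]
    rw [Submodule.eq_bot_iff]
    intro y hy
    have hy' : (inner ℂ (A y) y : ℂ) = 0 :=
      (Submodule.mem_orthogonal _ _).mp hy (A y) ⟨y, rfl⟩
    have hSy : S y = 0 := by
      have := hinner y
      rw [hy'] at this
      have : (‖S y‖ : ℂ) ^ 2 = 0 := this.symm
      have : ‖S y‖ = 0 := by
        have h0 : (‖S y‖ : ℂ) = 0 := pow_eq_zero_iff two_ne_zero |>.mp this
        exact_mod_cast h0
      exact norm_eq_zero.mp this
    have := h y
    rw [hSy, norm_zero] at this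
    have : ‖y‖ ≤ 0 := by nlinarith [norm_nonneg y]
    exact norm_eq_zero.mp (le_antisymm this (norm_nonneg y))
  exact ⟨(ContinuousLinearEquiv.ofBijective A hker hrange).toUnit, by
    simp [ContinuousLinearEquiv.toUnit, ContinuousLinearEquiv.coe_ofBijective]⟩

lemma aux_adjoint_sub (S : H →L[ℂ] H) (c : ℝ) (hc : 0 < c) (h : ∀ x : H, c * ‖x‖ ≤ ‖S x‖)
    (x : H) : adjoint S (x - (S * sharp S) x) = 0 := by
  have hu := aux_isUnit S c hc h
  have : adjoint S ((S * sharp S) x) = adjoint S x := by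
    have : adjoint S * (S * sharp S) = adjoint S := by
      rw [sharp, ← mul_assoc, ← mul_assoc, Ring.mul_inverse_cancel _ hu, one_mul]
    calc adjoint S ((S * sharp S) x) = (adjoint S * (S * sharp S)) x := rfl
      _ = adjoint S x := by rw [this]
  rw [map_sub, this, sub_self]

lemma aux_proj (S : H →L[ℂ] H) (c : ℝ) (hc : 0 < c) (h : ∀ x : H, c * ‖x‖ ≤ ‖S x‖) :
    ∀ x : H, (S * sharp S) x ∈ LinearMap.range ((S : H →L[ℂ] H) : H →ₗ[ℂ] H) ∧
      ∀ y ∈ LinearMap.range ((S : H →L[ℂ] H) : H →ₗ[ℂ] H), (inner ℂ (x - (S * sharp S) x) y : ℂ) = 0 := by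
  intro x
  constructor
  · exact ⟨sharp S x, rfl⟩
  · rintro y ⟨z, rfl⟩
    rw [ContinuousLinearMap.coe_coe, ← adjoint_inner_left, aux_adjoint_sub S c hc h x, inner_zero_left]

end Aux

/-- For a bounded-below operator `T`, `Tⁿ(Tⁿ)^#` is the orthogonal projection
onto `Tⁿ H`; and if moreover `T` is a near-isometry, then
`Tⁿ(Tⁿ)^# − Tⁿ⁺¹(Tⁿ⁺¹)^#` is the orthogonal projection onto `Tⁿ(ker T*)`. -/
theorem stmt13 {H : Type*} [NormedAddCommGroup H] [InnerProductSpace ℂ H] [CompleteSpace H]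
    (T : H →L[ℂ] H) (δ : ℝ) (hδ : 0 < δ) (hlow : ∀ x : H, δ * ‖x‖ ≤ ‖T x‖) (n : ℕ) :
    IsOrthoProjOnto ((T ^ n) * sharp (T ^ n)) (LinearMap.range ((T ^ n : H →L[ℂ] H) : H →ₗ[ℂ] H)) ∧
    (IsNearIsometry T →
      IsOrthoProjOnto ((T ^ n) * sharp (T ^ n) - (T ^ (n + 1)) * sharp (T ^ (n + 1)))
        ((LinearMap.ker ((adjoint T : H →L[ℂ] H) : H →ₗ[ℂ] H)).map ((T ^ n : H →L[ℂ] H) : H →ₗ[ℂ] H))) := by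
  have hbbn : ∀ m : ℕ, ∀ x : H, δ ^ m * ‖x‖ ≤ ‖(T ^ m) x‖ := by
    intro m
    induction m with
    | zero => intro x; simp
    | succ k ih =>
      intro x
      have h1 : (T ^ (k + 1)) x = (T ^ k) (T x) := by rw [pow_succ]; rfl
      rw [h1, pow_succ]
      calc δ ^ k * δ * ‖x‖ = δ ^ k * (δ * ‖x‖) := by ring
        _ ≤ δ ^ k * ‖T x‖ :=
            mul_le_mul_of_nonneg_left (hlow x) (by positivity)
        _ ≤ ‖(T ^ k) (T x)‖ := ih (T x)
  have hP : ∀ m : ℕ, ∀ x : H, ((T ^ m) * sharp (T ^ m)) x ∈ LinearMap.range ((T ^ m : H →L[ℂ] H) : H →ₗ[ℂ] H) ∧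
      ∀ y ∈ LinearMap.range ((T ^ m : H →L[ℂ] H) : H →ₗ[ℂ] H), (inner ℂ (x - ((T ^ m) * sharp (T ^ m)) x) y : ℂ) = 0 :=
    fun m => aux_proj (T ^ m) (δ ^ m) (pow_pos hδ m) (hbbn m)
  refine ⟨fun x => hP n x, ?_⟩
  intro hNI x
  set w := sharp (T ^ n) x with hwdef
  set v := sharp T w with hvdef
  have hu : adjoint T (w - (T * sharp T) w) = 0 := aux_adjoint_sub T δ hδ hlow w
  set u := w - (T * sharp T) w with hudef
  have humem : u ∈ LinearMap.ker ((adjoint T : H →L[ℂ] H) : H →ₗ[ℂ] H) := LinearMap.mem_ker.mpr hu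
  have hw' : u + T v = w := by
    rw [hudef, hvdef, ContinuousLinearMap.mul_apply]
    abel
  have hdecomp : (T ^ n) w = (T ^ n) u + (T ^ (n + 1)) v := by
    have h5 : (T ^ (n + 1)) v = (T ^ n) (T v) := by rw [pow_succ]; rfl
    rw [← hw', map_add, h5]
  have hPnx : ((T ^ n) * sharp (T ^ n)) x = (T ^ n) w := by rw [ContinuousLinearMap.mul_apply, hwdef]
  set a := (T ^ (n + 1)) v with hadef
  set b := ((T ^ (n + 1)) * sharp (T ^ (n + 1))) x with hbdef
  have hbmem : b ∈ LinearMap.range ((T ^ (n + 1) : H →L[ℂ] H) : H →ₗ[ℂ] H) := (hP (n + 1) x).1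
  have hamem : a ∈ LinearMap.range ((T ^ (n + 1) : H →L[ℂ] H) : H →ₗ[ℂ] H) := ⟨v, rfl⟩
  have hxa : ∀ y ∈ LinearMap.range ((T ^ (n + 1) : H →L[ℂ] H) : H →ₗ[ℂ] H), (inner ℂ (x - a) y : ℂ) = 0 := by
    rintro y ⟨z, rfl⟩
    have hx1 : x - a = (x - ((T ^ n) * sharp (T ^ n)) x) + (T ^ n) u := by
      rw [hPnx, hdecomp]
      abel
    rw [hx1, inner_add_left]
    have hz : (T ^ (n + 1)) z ∈ LinearMap.range ((T ^ n : H →L[ℂ] H) : H →ₗ[ℂ] H) := ⟨T z, by rw [pow_succ]; rfl⟩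
    rw [ContinuousLinearMap.coe_coe, (hP n x).2 _ hz, hNI.2 n u humem z, add_zero]
  have hab : a = b := by
    have hmem : a - b ∈ LinearMap.range ((T ^ (n + 1) : H →L[ℂ] H) : H →ₗ[ℂ] H) := Submodule.sub_mem _ hamem hbmem
    have h1 : (inner ℂ (a - b) (a - b) : ℂ) = 0 := by
      have h2 : a - b = (x - b) - (x - a) := by abel
      calc (inner ℂ (a - b) (a - b) : ℂ) = inner ℂ ((x - b) - (x - a)) (a - b) := by rw [← h2]
        _ = inner ℂ (x - b) (a - b) - inner ℂ (x - a) (a - b) := inner_sub_left _ _ _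
        _ = 0 := by rw [(hP (n + 1) x).2 _ hmem, hxa _ hmem, sub_zero]
    exact sub_eq_zero.mp (inner_self_eq_zero.mp h1)
  have hDx : ((T ^ n) * sharp (T ^ n) - (T ^ (n + 1)) * sharp (T ^ (n + 1))) x = (T ^ n) u := by
    rw [sub_apply, hPnx, hdecomp, ← hbdef, ← hab, hadef]
    abel
  constructor
  · rw [hDx]
    exact Submodule.mem_map.mpr ⟨u, humem, rfl⟩
  · rintro y hy
    obtain ⟨u', hu', rfl⟩ := Submodule.mem_map.mp hy
    have hx2 : x - ((T ^ n) * sharp (T ^ n) - (T ^ (n + 1)) * sharp (T ^ (n + 1))) x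
        = (x - ((T ^ n) * sharp (T ^ n)) x) + b := by
      rw [sub_apply, hbdef]; abel
    rw [hx2, inner_add_left]
    have e1 := (hP n x).2 ((T ^ n) u') ⟨u', rfl⟩
    have e2 : (inner ℂ b ((T ^ n) u') : ℂ) = 0 := by
      rw [← inner_conj_symm]
      have h3 : (inner ℂ ((T ^ n) u') b : ℂ) = 0 := by
        rw [hbdef, ContinuousLinearMap.mul_apply]
        exact hNI.2 n u' hu' _
      rw [h3, map_zero]
    rw [ContinuousLinearMap.coe_coe, e1, e2, add_zero]
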